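/- Let d ≥ 1 be an integer, set q = 2(d+2)/d and α = 4/(d+4). Let T > 0, let ν : [0,T] → [0, ∞) be measurable and let g : [0,T] × ℝ^d → [0, ∞) be measurable. Then ∫₀^T ν(t)·‖g(t,·)‖²_{L²(ℝ^d)} dt ≤ ( ∫₀^T ν(t)^{1/α} · ‖g(t,·)‖_{L¹(ℝ^d)} dt )^{α} · ( ∫₀^T ‖g(t,·)‖_{L^q(ℝ^d)}^{q} dt )^{d/(d+4)}, where all quantities take values in [0, ∞]. -/

import Mathlib

open MeasureTheory

/-- Weighted space-time interpolation (inequality (3.15) of the paper):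
with `q = 2(d+2)/d` and `α = 4/(d+4)`,
`∫₀^T ν ‖g‖²_{L²} ≤ (∫₀^T ν^{1/α} ‖g‖_{L¹})^α (∫₀^T ‖g‖_{L^q}^q)^{d/(d+4)}`. -/
theorem weighted_spacetime_interpolation
    (d : ℕ) (hd : 1 ≤ d) (T : ℝ) (hT : 0 < T)
    (ν : ℝ → ℝ) (hν : Measurable ν) (hνpos : ∀ t, 0 ≤ ν t)
    (g : ℝ → EuclideanSpace ℝ (Fin d) → ℝ)
    (hg : Measurable (Function.uncurry g)) (hgpos : ∀ t x, 0 ≤ g t x) :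
    ∫⁻ t in Set.Icc (0:ℝ) T, ENNReal.ofReal (ν t) * eLpNorm (g t) 2 volume ^ (2:ℝ) ≤
      (∫⁻ t in Set.Icc (0:ℝ) T,
          ENNReal.ofReal (ν t ^ (((d:ℝ) + 4) / 4)) * eLpNorm (g t) 1 volume) ^
            ((4:ℝ) / ((d:ℝ) + 4)) *
        (∫⁻ t in Set.Icc (0:ℝ) T,
            eLpNorm (g t) (ENNReal.ofReal (2 * ((d:ℝ) + 2) / d)) volume ^
              (2 * ((d:ℝ) + 2) / d)) ^ ((d:ℝ) / ((d:ℝ) + 4)) := by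
  have hdr : (1:ℝ) ≤ (d:ℝ) := by exact_mod_cast hd
  have hd0 : (0:ℝ) < (d:ℝ) := by linarith
  have hd4 : (0:ℝ) < (d:ℝ) + 4 := by linarith
  set qr : ℝ := 2 * ((d:ℝ) + 2) / d with hqr
  set a : ℝ := 4 / ((d:ℝ) + 4) with ha
  set b : ℝ := (d:ℝ) / ((d:ℝ) + 4) with hb
  have hqr0 : (0:ℝ) < qr := by rw [hqr]; positivity
  have ha0 : 0 < a := by rw [ha]; positivity
  have hb0 : 0 ≤ b := by rw [hb]; positivity
  have hab : a + b = 1 := by rw [ha, hb]; field_simp; ring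
  have habq : a + qr * b = 2 := by rw [ha, hb, hqr]; field_simp; ring
  -- the nonnegative lift of g
  set G : ℝ → EuclideanSpace ℝ (Fin d) → ENNReal := fun t x => (‖g t x‖₊ : ENNReal) with hG
  have hGm : Measurable (fun p : ℝ × EuclideanSpace ℝ (Fin d) => G p.1 p.2) := by
    exact hg.enorm
  have hGt : ∀ t, Measurable (G t) := fun t => (hg.of_uncurry_left).enorm
  -- identification of the three norms with lintegrals
  have h2 : ∀ t, eLpNorm (g t) 2 volume ^ (2:ℝ) = ∫⁻ x, G t x ^ (2:ℝ) := by
    intro t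
    rw [eLpNorm_eq_lintegral_rpow_enorm_toReal (by norm_num) (by norm_num), ← ENNReal.rpow_mul]
    norm_num
    rfl
  have h1 : ∀ t, eLpNorm (g t) 1 volume = ∫⁻ x, G t x := fun t =>
    eLpNorm_one_eq_lintegral_enorm
  have hq : ∀ t, eLpNorm (g t) (ENNReal.ofReal qr) volume ^ qr = ∫⁻ x, G t x ^ qr := by
    intro t
    rw [eLpNorm_eq_lintegral_rpow_enorm_toReal (by simp [ENNReal.ofReal_eq_zero]; linarith)
      ENNReal.ofReal_ne_top, ENNReal.toReal_ofReal hqr0.le, ← ENNReal.rpow_mul,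
      one_div, inv_mul_cancel₀ hqr0.ne']
    simp
    rfl
  -- pointwise (in t) spatial interpolation
  have key : ∀ t, ENNReal.ofReal (ν t) * eLpNorm (g t) 2 volume ^ (2:ℝ) ≤
      (ENNReal.ofReal (ν t ^ (((d:ℝ) + 4) / 4)) * eLpNorm (g t) 1 volume) ^ a *
        (eLpNorm (g t) (ENNReal.ofReal qr) volume ^ qr) ^ b := by
    intro t
    rw [h2, h1, hq]
    have hsp : ∫⁻ x, G t x ^ (2:ℝ) ≤ (∫⁻ x, G t x) ^ a * (∫⁻ x, G t x ^ qr) ^ b := by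
      have : ∀ x, G t x ^ (2:ℝ) = G t x ^ a * (G t x ^ qr) ^ b := by
        intro x
        rw [← ENNReal.rpow_mul, ← ENNReal.rpow_add_of_nonneg _ _ ha0.le
          (by positivity), habq]
      simp_rw [this]
      exact ENNReal.lintegral_mul_norm_pow_le (hGt t).aemeasurable
        ((hGt t).pow_const qr).aemeasurable ha0.le hb0 hab
    calc ENNReal.ofReal (ν t) * ∫⁻ x, G t x ^ (2:ℝ)
        ≤ ENNReal.ofReal (ν t) * ((∫⁻ x, G t x) ^ a * (∫⁻ x, G t x ^ qr) ^ b) :=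
          mul_le_mul_right hsp _
      _ = (ENNReal.ofReal (ν t ^ (((d:ℝ) + 4) / 4)) * ∫⁻ x, G t x) ^ a *
            (∫⁻ x, G t x ^ qr) ^ b := by
          rw [ENNReal.mul_rpow_of_nonneg _ _ ha0.le,
            ← ENNReal.ofReal_rpow_of_nonneg (hνpos t) (by positivity),
            ← ENNReal.rpow_mul]
          have h1a : ((d:ℝ) + 4) / 4 * a = 1 := by rw [ha]; field_simp
          rw [h1a, ENNReal.rpow_one, mul_assoc]
  -- measurability in t
  have hI1 : Measurable fun t => ENNReal.ofReal (ν t ^ (((d:ℝ) + 4) / 4)) *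
      eLpNorm (g t) 1 volume := by
    simp_rw [h1]
    have hm : Measurable fun t => ν t ^ (((d:ℝ) + 4) / 4) := by measurability
    exact (hm.ennreal_ofReal).mul (Measurable.lintegral_prod_right hGm)
  have hIq : Measurable fun t => eLpNorm (g t) (ENNReal.ofReal qr) volume ^ qr := by
    simp_rw [hq]
    exact Measurable.lintegral_prod_right (hGm.pow_const qr)
  -- Hölder in time
  calc ∫⁻ t in Set.Icc (0:ℝ) T, ENNReal.ofReal (ν t) * eLpNorm (g t) 2 volume ^ (2:ℝ)
      ≤ ∫⁻ t in Set.Icc (0:ℝ) T,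
          (ENNReal.ofReal (ν t ^ (((d:ℝ) + 4) / 4)) * eLpNorm (g t) 1 volume) ^ a *
            (eLpNorm (g t) (ENNReal.ofReal qr) volume ^ qr) ^ b :=
        lintegral_mono fun t => key t
    _ ≤ _ :=
        ENNReal.lintegral_mul_norm_pow_le hI1.aemeasurable hIq.aemeasurable ha0.le hb0 hab
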